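/- In H_d = ⟨a,b,c ∣ a², b², c², (ab)³, (ac)², (bc)^d, (bac)^d⟩, for every natural number k one has (bc)^k = 1 if and only if (bac)^k = 1. -/

import Mathlib

def geoRels (d : ℕ) : Set (FreeGroup (Fin 3)) :=
  {(FreeGroup.of 0)^2, (FreeGroup.of 1)^2, (FreeGroup.of 2)^2,
   (FreeGroup.of 0 * FreeGroup.of 1)^3, (FreeGroup.of 0 * FreeGroup.of 2)^2,
   (FreeGroup.of 1 * FreeGroup.of 2)^d,
   (FreeGroup.of 1 * FreeGroup.of 0 * FreeGroup.of 2)^d}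

abbrev H (d : ℕ) := PresentedGroup (geoRels d)

namespace BcBacAux

variable (d : ℕ)

lemma rel_one {r : FreeGroup (Fin 3)} (h : r ∈ geoRels d) :
    (QuotientGroup.mk r : H d) = 1 := by
  rw [QuotientGroup.eq_one_iff]
  exact Subgroup.subset_normalClosure h

lemma of_eq (x : Fin 3) :
    (PresentedGroup.of x : H d) = QuotientGroup.mk (FreeGroup.of x) := rfl

lemma ha : (PresentedGroup.of 0 : H d) * PresentedGroup.of 0 = 1 := by
  have := rel_one d (r := (FreeGroup.of 0)^2) (by simp [geoRels])
  exact this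

lemma hb : (PresentedGroup.of 1 : H d) * PresentedGroup.of 1 = 1 := by
  have := rel_one d (r := (FreeGroup.of 1)^2) (by simp [geoRels])
  exact this

lemma hc : (PresentedGroup.of 2 : H d) * PresentedGroup.of 2 = 1 := by
  have := rel_one d (r := (FreeGroup.of 2)^2) (by simp [geoRels])
  exact this

lemma hab : ((PresentedGroup.of 0 : H d) * PresentedGroup.of 1)^3 = 1 := by
  have := rel_one d (r := (FreeGroup.of 0 * FreeGroup.of 1)^3) (by simp [geoRels])
  exact this

lemma hac : ((PresentedGroup.of 0 : H d) * PresentedGroup.of 2)^2 = 1 := by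
  have := rel_one d (r := (FreeGroup.of 0 * FreeGroup.of 2)^2) (by simp [geoRels])
  exact this

lemma hbc : ((PresentedGroup.of 1 : H d) * PresentedGroup.of 2)^d = 1 := by
  have := rel_one d (r := (FreeGroup.of 1 * FreeGroup.of 2)^d) (by simp [geoRels])
  exact this

lemma hbac : ((PresentedGroup.of 1 : H d) * PresentedGroup.of 0 * PresentedGroup.of 2)^d = 1 := by
  have := rel_one d (r := (FreeGroup.of 1 * FreeGroup.of 0 * FreeGroup.of 2)^d)
    (by simp [geoRels])
  exact this

/-- The target map of the automorphism `a ↦ a, b ↦ b, c ↦ ac`. -/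
def f : Fin 3 → H d :=
  ![PresentedGroup.of 0, PresentedGroup.of 1, PresentedGroup.of 0 * PresentedGroup.of 2]

lemma hf : ∀ r ∈ geoRels d, FreeGroup.lift (f d) r = 1 := by
  intro r hr
  have hA := ha d
  have hB := hb d
  have hC := hc d
  have hAB := hab d
  have hAC := hac d
  have hBC := hbc d
  have hBAC := hbac d
  simp only [geoRels, Set.mem_insert_iff, Set.mem_singleton_iff] at hr
  rcases hr with rfl | rfl | rfl | rfl | rfl | rfl | rfl <;>
    simp only [map_pow, map_mul, FreeGroup.lift_apply_of, f, Matrix.cons_val_zero,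
      Matrix.cons_val_one, Matrix.head_cons, Matrix.cons_val_two, Matrix.tail_cons]
  · simpa [pow_two] using hA
  · simpa [pow_two] using hB
  · exact hAC
  · exact hAB
  · -- (a * (a*c))^2 = c^2 = 1
    have : (PresentedGroup.of 0 : H d) * (PresentedGroup.of 0 * PresentedGroup.of 2)
        = PresentedGroup.of 2 := by
      rw [← mul_assoc, hA, one_mul]
    rw [this]
    simpa [pow_two] using hC
  · -- (b * (a*c))^d = (bac)^d = 1
    have : (PresentedGroup.of 1 : H d) * (PresentedGroup.of 0 * PresentedGroup.of 2)
        = PresentedGroup.of 1 * PresentedGroup.of 0 * PresentedGroup.of 2 := by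
      rw [mul_assoc]
    rw [this]; exact hBAC
  · -- (b * a * (a*c))^d = (bc)^d = 1
    have : (PresentedGroup.of 1 : H d) * PresentedGroup.of 0 *
        (PresentedGroup.of 0 * PresentedGroup.of 2)
        = PresentedGroup.of 1 * PresentedGroup.of 2 := by
      rw [mul_assoc (PresentedGroup.of 1), ← mul_assoc (PresentedGroup.of 0), hA, one_mul]
    rw [this]; exact hBC

/-- The endomorphism `a ↦ a, b ↦ b, c ↦ ac`. -/
def φ : H d →* H d := PresentedGroup.toGroup (hf d)

lemma φ_of (x : Fin 3) : φ d (PresentedGroup.of x) = f d x :=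
  PresentedGroup.toGroup.of (hf d)

lemma φ_bc : φ d (PresentedGroup.of 1 * PresentedGroup.of 2)
    = PresentedGroup.of 1 * PresentedGroup.of 0 * PresentedGroup.of 2 := by
  rw [map_mul, φ_of, φ_of]
  simp [f, mul_assoc]

lemma φ_bac : φ d (PresentedGroup.of 1 * PresentedGroup.of 0 * PresentedGroup.of 2)
    = PresentedGroup.of 1 * PresentedGroup.of 2 := by
  rw [map_mul, map_mul, φ_of, φ_of, φ_of]
  simp only [f, Matrix.cons_val_zero, Matrix.cons_val_one, Matrix.head_cons,
    Matrix.cons_val_two, Matrix.tail_cons]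
  rw [mul_assoc (PresentedGroup.of 1), ← mul_assoc (PresentedGroup.of 0), ha, one_mul]

end BcBacAux

/-- In `H_d`, for every `k : ℕ`, `(bc)^k = 1 ↔ (bac)^k = 1`
(with `a = of 0`, `b = of 1`, `c = of 2`). -/
theorem bc_pow_eq_one_iff_bac_pow_eq_one (d k : ℕ) :
    ((PresentedGroup.of 1 * PresentedGroup.of 2 : H d)^k = 1) ↔
    ((PresentedGroup.of 1 * PresentedGroup.of 0 * PresentedGroup.of 2 : H d)^k = 1) := by
  constructor
  · intro h
    have := congrArg (BcBacAux.φ d) h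
    simpa [map_pow, BcBacAux.φ_bc] using this
  · intro h
    have := congrArg (BcBacAux.φ d) h
    simpa [map_pow, BcBacAux.φ_bac] using this
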